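/- For a digraph G with vertex set V, and any two vertex sets Z, Y ⊆ V, the maximum number of vertex-disjoint directed paths from Y to Z equals the minimum size of a vertex set c ⊆ V whose removal ensures there is no directed path from Y \ c to Z \ c (Menger's theorem, vertex version with possibly overlapping source/sink sets). -/

import Mathlib

set_option linter.unusedVariables false

open Classical

/-- A directed path in a digraph `G`: a nonempty list of distinct vertices,
consecutive ones joined by edges of `G`. -/
def IsDiPath {V : Type*} (G : V → V → Prop) (p : List V) : Prop :=
  p ≠ [] ∧ p.Chain' G ∧ p.Nodup

/-- A family of vertex-disjoint directed paths from `Y` to `Z` in `G`. -/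
def PathFamily {V : Type*} (G : V → V → Prop) (Z Y : Finset V)
    (P : Finset (List V)) : Prop :=
  (∀ p ∈ P, IsDiPath G p ∧ (∃ a ∈ Y, p.head? = some a) ∧ (∃ b ∈ Z, p.getLast? = some b)) ∧
  (P : Set (List V)).Pairwise fun p q => ∀ v, v ∈ p → v ∉ q

/-- The path rank `ρ_G(Z, Y)`: the maximum number of vertex-disjoint directed
paths from `Y` to `Z` in `G`. -/
noncomputable def pathRank {V : Type*} (G : V → V → Prop) (Z Y : Finset V) : ℕ :=
  sSup {k | ∃ P : Finset (List V), PathFamily G Z Y P ∧ P.card = k}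

set_option linter.unusedSectionVars false

section ListAux
variable {V : Type*}

lemma mem_of_head?_eq {l : List V} {a : V} (h : l.head? = some a) : a ∈ l := by
  cases l with
  | nil => simp at h
  | cons b t => simp_all

lemma mem_of_getLast?_eq {l : List V} {a : V} (h : l.getLast? = some a) : a ∈ l := by
  obtain ⟨ys, rfl⟩ := List.getLast?_eq_some_iff.mp h
  simp

lemma getLast?_cons_ne {a : V} {l : List V} (h : l ≠ []) :
    (a :: l).getLast? = l.getLast? := by
  cases l with
  | nil => exact absurd rfl h
  | cons b t => simp

/-- Extract a nodup path from a walk (a `Chain'` list). -/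
lemma exists_nodup_path {G : V → V → Prop} :
    ∀ (n : ℕ) (p : List V), p.length ≤ n → p.Chain' G → p ≠ [] →
      ∃ q : List V, q.Chain' G ∧ q.Nodup ∧ q ≠ [] ∧ q.head? = p.head? ∧
        q.getLast? = p.getLast? ∧ ∀ v ∈ q, v ∈ p := by
  intro n
  induction n with
  | zero => intro p hl _ hne; simp [List.length_eq_zero_iff.mp (Nat.le_zero.mp hl)] at hne
  | succ n ih =>
    intro p hl hch hne
    match p with
    | [] => exact absurd rfl hne
    | a :: t =>
      by_cases ha : a ∈ t
      · obtain ⟨t₁, t₂, rfl⟩ := List.append_of_mem ha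
        have hsuf : (a :: t₂) <:+ (a :: (t₁ ++ a :: t₂)) := ⟨a :: t₁, by simp⟩
        have hch2 : (a :: t₂).Chain' G := hch.suffix hsuf
        have hlen : (a :: t₂).length ≤ n := by
          simp only [List.length_cons, List.length_append] at hl ⊢; omega
        obtain ⟨q, h1, h2, h3, h4, h5, h6⟩ := ih _ hlen hch2 (by simp)
        refine ⟨q, h1, h2, h3, by simpa using h4, ?_, fun v hv => ?_⟩
        · rw [h5, getLast?_cons_ne (l := t₁ ++ a :: t₂) (by simp), List.getLast?_append]
          cases hgl : (a :: t₂).getLast? with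
          | none => simp at hgl
          | some b => simp
        · have := h6 v hv
          simp only [List.mem_cons, List.mem_append] at this ⊢
          tauto
      · by_cases ht : t = []
        · subst ht
          exact ⟨[a], List.isChain_singleton a, by simp, by simp, rfl, rfl, by simp⟩
        · obtain ⟨q, h1, h2, h3, h4, h5, h6⟩ := ih t (by simpa using hl) hch.tail ht
          refine ⟨a :: q, ?_, ?_, by simp, rfl, ?_, ?_⟩
          · refine List.isChain_cons.mpr ?_
            refine ⟨fun y hy => ?_, h1⟩
            have : t.head? = some y := by rw [← h4]; exact hy
            exact (List.isChain_cons.mp hch).1 y this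
          · exact List.nodup_cons.mpr ⟨fun hc => ha (h6 a hc), h2⟩
          · rw [getLast?_cons_ne h3, getLast?_cons_ne ht, h5]
          · intro v hv
            rcases List.mem_cons.mp hv with rfl | hv
            · simp
            · exact List.mem_cons_of_mem _ (h6 v hv)

end ListAux
section SplitAux
variable {V : Type*}

lemma exists_first_mem {X : V → Prop} :
    ∀ p : List V, (∃ v ∈ p, X v) → ∃ q w r, p = q ++ w :: r ∧ X w ∧ ∀ v ∈ q, ¬ X v := by
  intro p
  induction p with
  | nil => simp
  | cons a t ih =>
    intro h
    by_cases hXa : X a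
    · exact ⟨[], a, t, rfl, hXa, by simp⟩
    · have ht : ∃ v ∈ t, X v := by
        obtain ⟨v, hv, hXv⟩ := h
        rcases List.mem_cons.mp hv with rfl | hv
        · exact absurd hXv hXa
        · exact ⟨v, hv, hXv⟩
      obtain ⟨q, w, r, heq, hw, hq⟩ := ih ht
      refine ⟨a :: q, w, r, by simp [heq], hw, ?_⟩
      intro v hv
      rcases List.mem_cons.mp hv with rfl | hv
      · exact hXa
      · exact hq v hv

lemma exists_last_mem {X : V → Prop} :
    ∀ p : List V, (∃ v ∈ p, X v) → ∃ q w r, p = q ++ w :: r ∧ X w ∧ ∀ v ∈ r, ¬ X v := by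
  intro p h
  obtain ⟨q, w, r, heq, hw, hq⟩ := exists_first_mem (X := X) p.reverse
    (by obtain ⟨v, hv, hXv⟩ := h; exact ⟨v, by simpa using hv, hXv⟩)
  refine ⟨r.reverse, w, q.reverse, ?_, hw, fun v hv => hq v (by simpa using hv)⟩
  have := congrArg List.reverse heq
  simpa [List.reverse_append] using this

end SplitAux

section Trunc
variable {V : Type*} [DecidableEq V]

/-- Truncate a list at the first element belonging to `X`. -/
def truncF (X : Finset V) : List V → List V
  | [] => []
  | a :: t => if a ∈ X then [a] else a :: truncF X t

lemma truncF_prefix (X : Finset V) : ∀ p : List V, truncF X p <+: p := by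
  intro p
  induction p with
  | nil => simp [truncF]
  | cons a t ih =>
    by_cases h : a ∈ X
    · simp [truncF, h]
    · obtain ⟨r, hr⟩ := ih
      exact ⟨r, by simp [truncF, h, hr]⟩

lemma truncF_ne_nil (X : Finset V) {p : List V} (h : p ≠ []) : truncF X p ≠ [] := by
  cases p with
  | nil => exact absurd rfl h
  | cons a t => by_cases ha : a ∈ X <;> simp [truncF, ha]

lemma truncF_head? (X : Finset V) (p : List V) : (truncF X p).head? = p.head? := by
  cases p with
  | nil => rfl
  | cons a t => by_cases ha : a ∈ X <;> simp [truncF, ha]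

lemma truncF_spec (X : Finset V) :
    ∀ p : List V, (∃ v ∈ p, v ∈ X) →
      ∃ w ∈ X, (truncF X p).getLast? = some w ∧ ∀ v ∈ (truncF X p).dropLast, v ∉ X := by
  intro p
  induction p with
  | nil => simp
  | cons a t ih =>
    intro h
    by_cases ha : a ∈ X
    · exact ⟨a, ha, by simp [truncF, ha], by simp [truncF, ha]⟩
    · have ht : ∃ v ∈ t, v ∈ X := by
        obtain ⟨v, hv, hXv⟩ := h
        rcases List.mem_cons.mp hv with rfl | hv
        · exact absurd hXv ha
        · exact ⟨v, hv, hXv⟩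
      have htne : t ≠ [] := by rintro rfl; simp at ht
      obtain ⟨w, hwX, hwl, hwd⟩ := ih ht
      refine ⟨w, hwX, ?_, ?_⟩
      · rw [show truncF X (a :: t) = a :: truncF X t from by simp [truncF, ha],
          getLast?_cons_ne (truncF_ne_nil X htne), hwl]
      · rw [show truncF X (a :: t) = a :: truncF X t from by simp [truncF, ha],
          List.dropLast_cons_of_ne_nil (truncF_ne_nil X htne)]
        intro v hv
        rcases List.mem_cons.mp hv with rfl | hv
        · exact ha
        · exact hwd v hv

/-- Truncate a list from the last element belonging to `X`. -/
def truncL (X : Finset V) (p : List V) : List V := (truncF X p.reverse).reverse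

lemma truncL_suffix (X : Finset V) (p : List V) : truncL X p <:+ p := by
  have h1 : (truncF X p.reverse).reverse <:+ p.reverse.reverse :=
    List.reverse_suffix.mpr (truncF_prefix X p.reverse)
  simpa [truncL] using h1

lemma truncL_ne_nil (X : Finset V) {p : List V} (h : p ≠ []) : truncL X p ≠ [] := by
  have := truncF_ne_nil X (p := p.reverse) (by simpa using h)
  simp [truncL, this]

lemma truncL_getLast? (X : Finset V) (p : List V) : (truncL X p).getLast? = p.getLast? := by
  rw [List.getLast?_eq_head?_reverse, List.getLast?_eq_head?_reverse]
  simp [truncL, truncF_head?]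

lemma truncL_spec (X : Finset V) (p : List V) (h : ∃ v ∈ p, v ∈ X) :
    ∃ w ∈ X, (truncL X p).head? = some w ∧ ∀ v ∈ (truncL X p).tail, v ∉ X := by
  obtain ⟨w, hwX, hwl, hwd⟩ := truncF_spec X p.reverse
    (by obtain ⟨v, hv, hXv⟩ := h; exact ⟨v, by simpa using hv, hXv⟩)
  refine ⟨w, hwX, ?_, ?_⟩
  · rw [truncL, ← List.getLast?_reverse]
    simpa using hwl
  · intro v hv
    rw [truncL, List.tail_reverse] at hv
    exact hwd v (by simpa using hv)

end Trunc
section Menger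
variable {V : Type*} [Fintype V] [DecidableEq V]

/-- `c` separates `Z` from `Y` in `G`. -/
def Cut (G : V → V → Prop) (Z Y c : Finset V) : Prop :=
  ¬ ∃ p : List V, IsDiPath G p ∧ (∀ v ∈ p, v ∉ c) ∧
      (∃ a ∈ Y \ c, p.head? = some a) ∧ (∃ b ∈ Z \ c, p.getLast? = some b)

noncomputable def minCut (G : V → V → Prop) (Z Y : Finset V) : ℕ :=
  sInf {k | ∃ c : Finset V, c.card = k ∧ Cut G Z Y c}

variable {G : V → V → Prop} {Z Y c : Finset V}

/-- A walk avoiding `c` from `Y` to `Z` contradicts `Cut`. -/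
lemma Cut.not_walk (hc : Cut G Z Y c) {p : List V} (hch : p.Chain' G) (hne : p ≠ [])
    (hav : ∀ v ∈ p, v ∉ c) {a b : V} (ha : a ∈ Y) (hh : p.head? = some a)
    (hb : b ∈ Z) (hl : p.getLast? = some b) : False := by
  obtain ⟨q, h1, h2, h3, h4, h5, h6⟩ := exists_nodup_path p.length p le_rfl hch hne
  exact hc ⟨q, ⟨h3, h1, h2⟩, fun v hv => hav v (h6 v hv),
    ⟨a, Finset.mem_sdiff.mpr ⟨ha, hav a (mem_of_head?_eq hh)⟩, by rw [h4, hh]⟩,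
    ⟨b, Finset.mem_sdiff.mpr ⟨hb, hav b (mem_of_getLast?_eq hl)⟩, by rw [h5, hl]⟩⟩

lemma cut_univ : Cut G Z Y Finset.univ := by
  rintro ⟨p, _, _, ⟨a, ha, _⟩, _⟩
  simp at ha

lemma cutSet_nonempty : {k | ∃ c : Finset V, c.card = k ∧ Cut G Z Y c}.Nonempty :=
  ⟨(Finset.univ : Finset V).card, Finset.univ, rfl, cut_univ⟩

lemma minCut_exists : ∃ c : Finset V, c.card = minCut G Z Y ∧ Cut G Z Y c :=
  Nat.sInf_mem (cutSet_nonempty (G := G) (Z := Z) (Y := Y))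

lemma minCut_le (hc : Cut G Z Y c) : minCut G Z Y ≤ c.card :=
  Nat.sInf_le ⟨c, rfl, hc⟩

/-- Every path in a family meets every cut; hence families are at most as large as cuts. -/
lemma family_card_le_cut {P : Finset (List V)} (hP : PathFamily G Z Y P)
    (hc : Cut G Z Y c) : P.card ≤ c.card := by
  rcases P.eq_empty_or_nonempty with rfl | ⟨p₀, hp₀⟩
  · simp
  have hV : Nonempty V := by
    obtain ⟨⟨hne, _, _⟩, _, _⟩ := hP.1 p₀ hp₀
    cases p₀ with
    | nil => exact absurd rfl hne
    | cons a t => exact ⟨a⟩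
  have hex : ∀ p ∈ P, ∃ v, v ∈ c ∧ v ∈ p := by
    intro p hp
    by_contra hno
    push_neg at hno
    obtain ⟨⟨hne, hch, hnd⟩, ⟨a, haY, hha⟩, ⟨b, hbZ, hlb⟩⟩ := hP.1 p hp
    exact hc.not_walk hch hne (fun v hv hvc => hno v hvc hv) haY hha hbZ hlb
  classical
  set f : List V → V := fun p => if h : ∃ v, v ∈ c ∧ v ∈ p then h.choose else Classical.arbitrary V with hf
  apply Finset.card_le_card_of_injOn f
  · intro p hp
    have h := hex p hp
    simp only [hf, dif_pos h]
    exact h.choose_spec.1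
  · intro p hp q hq hfeq
    by_contra hne
    have h1 := hex p hp
    have h2 := hex q hq
    have hv1 : f p ∈ p := by simp only [hf, dif_pos h1]; exact h1.choose_spec.2
    have hv2 : f q ∈ q := by simp only [hf, dif_pos h2]; exact h2.choose_spec.2
    exact hP.2 hp hq hne (f p) hv1 (hfeq ▸ hv2)

end Menger
section Menger2
variable {V : Type*} [Fintype V] [DecidableEq V]

lemma PathFamily.mono {G G' : V → V → Prop} (h : ∀ u v, G' u v → G u v)
    {Z Y : Finset V} {P : Finset (List V)} (hP : PathFamily G' Z Y P) :
    PathFamily G Z Y P := by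
  refine ⟨fun p hp => ?_, hP.2⟩
  obtain ⟨⟨h1, h2, h3⟩, h4, h5⟩ := hP.1 p hp
  exact ⟨⟨h1, h2.imp h, h3⟩, h4, h5⟩

lemma Cut.anti {G G' : V → V → Prop} (h : ∀ u v, G' u v → G u v)
    {Z Y c : Finset V} (hc : Cut G Z Y c) : Cut G' Z Y c := by
  rintro ⟨p, ⟨h1, h2, h3⟩, h4, h5, h6⟩
  exact hc ⟨p, ⟨h1, h2.imp h, h3⟩, h4, h5, h6⟩

lemma minCut_anti {G G' : V → V → Prop} (h : ∀ u v, G' u v → G u v) (Z Y : Finset V) :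
    minCut G' Z Y ≤ minCut G Z Y := by
  obtain ⟨c, hcard, hc⟩ := minCut_exists (G := G) (Z := Z) (Y := Y)
  exact hcard ▸ minCut_le (hc.anti h)

lemma family_truncF {G : V → V → Prop} {X Y : Finset V} {P : Finset (List V)}
    (hP : PathFamily G X Y P) :
    ∃ P' : Finset (List V), PathFamily G X Y P' ∧ P'.card = P.card ∧
      ∀ p ∈ P', ∀ v ∈ p.dropLast, v ∉ X := by
  have key : ∀ p ∈ P, (truncF X p).head? = p.head? ∧ truncF X p ≠ [] ∧
      (∃ w ∈ X, (truncF X p).getLast? = some w ∧ ∀ v ∈ (truncF X p).dropLast, v ∉ X) := by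
    intro p hp
    obtain ⟨⟨hne, _, _⟩, _, ⟨b, hbX, hlb⟩⟩ := hP.1 p hp
    exact ⟨truncF_head? X p, truncF_ne_nil X hne,
      truncF_spec X p ⟨b, mem_of_getLast?_eq hlb, hbX⟩⟩
  have hsub : ∀ p, ∀ v ∈ truncF X p, v ∈ p :=
    fun p v hv => (truncF_prefix X p).sublist.subset hv
  refine ⟨P.image (truncF X), ⟨?_, ?_⟩, ?_, ?_⟩
  · intro q hq
    obtain ⟨p, hp, rfl⟩ := Finset.mem_image.mp hq
    obtain ⟨⟨hne, hch, hnd⟩, ⟨a, haY, hha⟩, _⟩ := hP.1 p hp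
    obtain ⟨hh, hne', w, hwX, hwl, _⟩ := key p hp
    exact ⟨⟨hne', hch.prefix (truncF_prefix X p), hnd.sublist (truncF_prefix X p).sublist⟩,
      ⟨a, haY, by rw [hh, hha]⟩, ⟨w, hwX, hwl⟩⟩
  · intro q1 hq1 q2 hq2 hne v hv1 hv2
    obtain ⟨p1, hp1, rfl⟩ := Finset.mem_image.mp hq1
    obtain ⟨p2, hp2, rfl⟩ := Finset.mem_image.mp hq2
    have hp12 : p1 ≠ p2 := fun h => hne (by rw [h])
    exact hP.2 hp1 hp2 hp12 v (hsub _ _ hv1) (hsub _ _ hv2)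
  · apply Finset.card_image_of_injOn
    intro p1 hp1 p2 hp2 heq
    by_contra hne
    obtain ⟨-, hne1, -⟩ := key p1 hp1
    obtain ⟨v, hv⟩ := List.exists_mem_of_ne_nil _ hne1
    exact hP.2 hp1 hp2 hne v (hsub _ _ hv) (hsub _ _ (heq ▸ hv))
  · intro q hq
    obtain ⟨p, hp, rfl⟩ := Finset.mem_image.mp hq
    obtain ⟨-, -, w, hwX, hwl, hwd⟩ := key p hp
    exact hwd

lemma family_truncL {G : V → V → Prop} {Z X : Finset V} {P : Finset (List V)}
    (hP : PathFamily G Z X P) :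
    ∃ P' : Finset (List V), PathFamily G Z X P' ∧ P'.card = P.card ∧
      ∀ p ∈ P', ∀ v ∈ p.tail, v ∉ X := by
  have key : ∀ p ∈ P, (truncL X p).getLast? = p.getLast? ∧ truncL X p ≠ [] ∧
      (∃ w ∈ X, (truncL X p).head? = some w ∧ ∀ v ∈ (truncL X p).tail, v ∉ X) := by
    intro p hp
    obtain ⟨⟨hne, _, _⟩, ⟨a, haX, hha⟩, _⟩ := hP.1 p hp
    exact ⟨truncL_getLast? X p, truncL_ne_nil X hne,
      truncL_spec X p ⟨a, mem_of_head?_eq hha, haX⟩⟩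
  have hsub : ∀ p, ∀ v ∈ truncL X p, v ∈ p :=
    fun p v hv => (truncL_suffix X p).sublist.subset hv
  refine ⟨P.image (truncL X), ⟨?_, ?_⟩, ?_, ?_⟩
  · intro q hq
    obtain ⟨p, hp, rfl⟩ := Finset.mem_image.mp hq
    obtain ⟨⟨hne, hch, hnd⟩, _, ⟨b, hbZ, hlb⟩⟩ := hP.1 p hp
    obtain ⟨hl, hne', w, hwX, hwh, _⟩ := key p hp
    exact ⟨⟨hne', hch.suffix (truncL_suffix X p), hnd.sublist (truncL_suffix X p).sublist⟩,
      ⟨w, hwX, hwh⟩, ⟨b, hbZ, by rw [hl, hlb]⟩⟩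
  · intro q1 hq1 q2 hq2 hne v hv1 hv2
    obtain ⟨p1, hp1, rfl⟩ := Finset.mem_image.mp hq1
    obtain ⟨p2, hp2, rfl⟩ := Finset.mem_image.mp hq2
    have hp12 : p1 ≠ p2 := fun h => hne (by rw [h])
    exact hP.2 hp1 hp2 hp12 v (hsub _ _ hv1) (hsub _ _ hv2)
  · apply Finset.card_image_of_injOn
    intro p1 hp1 p2 hp2 heq
    by_contra hne
    obtain ⟨-, hne1, -⟩ := key p1 hp1
    obtain ⟨v, hv⟩ := List.exists_mem_of_ne_nil _ hne1
    exact hP.2 hp1 hp2 hne v (hsub _ _ hv) (hsub _ _ (heq ▸ hv))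
  · intro q hq
    obtain ⟨p, hp, rfl⟩ := Finset.mem_image.mp hq
    obtain ⟨-, -, w, hwX, hwh, hwd⟩ := key p hp
    exact hwd

lemma family_cover_last {G : V → V → Prop} {X Y : Finset V} {P : Finset (List V)}
    (hP : PathFamily G X Y P) (hcard : X.card ≤ P.card) :
    ∀ w ∈ X, ∃ p ∈ P, p.getLast? = some w := by
  have hsubset : P.image (fun p => p.getLast?) ⊆ X.image some := by
    intro o ho
    obtain ⟨p, hp, rfl⟩ := Finset.mem_image.mp ho
    obtain ⟨-, -, b, hbX, hlb⟩ := hP.1 p hp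
    exact Finset.mem_image.mpr ⟨b, hbX, hlb.symm⟩
  have hinj : Set.InjOn (fun p : List V => p.getLast?) (P : Set (List V)) := by
    intro p1 hp1 p2 hp2 heq
    by_contra hne
    obtain ⟨-, -, b, hbX, hlb⟩ := hP.1 p1 hp1
    have hlb2 : p2.getLast? = some b := by
      simp only at heq; rw [← heq]; exact hlb
    exact hP.2 hp1 hp2 hne b (mem_of_getLast?_eq hlb) (mem_of_getLast?_eq hlb2)
  have hcards : (X.image some).card ≤ (P.image (fun p => p.getLast?)).card := by
    rw [Finset.card_image_of_injOn hinj, Finset.card_image_of_injective _ (Option.some_injective V)]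
    exact hcard
  have heq := Finset.eq_of_subset_of_card_le hsubset hcards
  intro w hw
  have : some w ∈ P.image (fun p => p.getLast?) := by
    rw [heq]; exact Finset.mem_image.mpr ⟨w, hw, rfl⟩
  obtain ⟨p, hp, hpl⟩ := Finset.mem_image.mp this
  exact ⟨p, hp, hpl⟩

lemma family_cover_head {G : V → V → Prop} {Z X : Finset V} {P : Finset (List V)}
    (hP : PathFamily G Z X P) (hcard : X.card ≤ P.card) :
    ∀ w ∈ X, ∃ p ∈ P, p.head? = some w := by
  have hsubset : P.image (fun p => p.head?) ⊆ X.image some := by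
    intro o ho
    obtain ⟨p, hp, rfl⟩ := Finset.mem_image.mp ho
    obtain ⟨-, ⟨a, haX, hha⟩, -⟩ := hP.1 p hp
    exact Finset.mem_image.mpr ⟨a, haX, hha.symm⟩
  have hinj : Set.InjOn (fun p : List V => p.head?) (P : Set (List V)) := by
    intro p1 hp1 p2 hp2 heq
    by_contra hne
    obtain ⟨-, ⟨a, haX, hha⟩, -⟩ := hP.1 p1 hp1
    have hha2 : p2.head? = some a := by
      simp only at heq; rw [← heq]; exact hha
    exact hP.2 hp1 hp2 hne a (mem_of_head?_eq hha) (mem_of_head?_eq hha2)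
  have hcards : (X.image some).card ≤ (P.image (fun p => p.head?)).card := by
    rw [Finset.card_image_of_injOn hinj, Finset.card_image_of_injective _ (Option.some_injective V)]
    exact hcard
  have heq := Finset.eq_of_subset_of_card_le hsubset hcards
  intro w hw
  have : some w ∈ P.image (fun p => p.head?) := by
    rw [heq]; exact Finset.mem_image.mpr ⟨w, hw, rfl⟩
  obtain ⟨p, hp, hph⟩ := Finset.mem_image.mp this
  exact ⟨p, hp, hph⟩

end Menger2
section Restrict
variable {V : Type*}

/-- Strengthen a chain when the relation can be upgraded using membership info,
with the first component known not to be the last element. -/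
lemma chain'_restrict {R S : V → V → Prop} :
    ∀ p : List V, p.Chain' R → (∀ u ∈ p.dropLast, ∀ v ∈ p, R u v → S u v) → p.Chain' S := by
  intro p
  induction p with
  | nil => intro _ _; exact List.isChain_nil
  | cons a t ih =>
    intro hch hres
    cases t with
    | nil => exact List.isChain_singleton a
    | cons b t' =>
      simp only [List.Chain', List.isChain_cons_cons] at hch ⊢
      refine ⟨hres a (by simp) b (by simp) hch.1, ih hch.2 ?_⟩
      intro u hu v hv
      refine hres u ?_ v (by simp [hv])
      rw [List.dropLast_cons_of_ne_nil (by simp)]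
      exact List.mem_cons_of_mem _ hu

lemma chain'_restrict_tail {R S : V → V → Prop} :
    ∀ p : List V, p.Chain' R → (∀ u ∈ p, ∀ v ∈ p.tail, R u v → S u v) → p.Chain' S := by
  intro p
  induction p with
  | nil => intro _ _; exact List.isChain_nil
  | cons a t ih =>
    intro hch hres
    cases t with
    | nil => exact List.isChain_singleton a
    | cons b t' =>
      simp only [List.Chain', List.isChain_cons_cons] at hch ⊢
      refine ⟨hres a (by simp) b (by simp) hch.1, ih hch.2 ?_⟩
      intro u hu v hv
      exact hres u (List.mem_cons_of_mem _ hu) v (List.mem_cons_of_mem _ hv)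

lemma chain'_singleton_of_no_edge {G : V → V → Prop} (hG : ∀ u v, ¬ G u v)
    {p : List V} (hch : p.Chain' G) (hne : p ≠ []) : ∃ a, p = [a] := by
  cases p with
  | nil => exact absurd rfl hne
  | cons a t =>
    cases t with
    | nil => exact ⟨a, rfl⟩
    | cons b t' => exact absurd (List.isChain_cons_cons.mp hch).1 (hG a b)

lemma mem_getLast_or_dropLast {l : List V} {u : V} (hu : u ∈ l) :
    u ∈ l.dropLast ∨ l.getLast? = some u := by
  cases l with
  | nil => simp at hu
  | cons a t =>
    have hne : a :: t ≠ [] := by simp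
    rw [← List.dropLast_append_getLast hne] at hu
    rcases List.mem_append.mp hu with h | h
    · exact Or.inl h
    · refine Or.inr (by rw [List.getLast?_eq_getLast hne]; congr 1; symm; simpa using h)

end Restrict

section Edgeless
variable {V : Type*} [Fintype V] [DecidableEq V]

lemma edgeless_family {G : V → V → Prop} (hG : ∀ u v, ¬ G u v) (Z Y : Finset V) :
    ∃ P : Finset (List V), PathFamily G Z Y P ∧ P.card = minCut G Z Y := by
  set P : Finset (List V) := (Y ∩ Z).image (fun a => [a]) with hP
  have hfam : PathFamily G Z Y P := by
    constructor
    · intro p hp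
      obtain ⟨a, ha, rfl⟩ := Finset.mem_image.mp hp
      obtain ⟨haY, haZ⟩ := Finset.mem_inter.mp ha
      exact ⟨⟨by simp, List.isChain_singleton a, by simp⟩, ⟨a, haY, rfl⟩, ⟨a, haZ, rfl⟩⟩
    · intro p hp q hq hne v hv1 hv2
      obtain ⟨a, _, rfl⟩ := Finset.mem_image.mp hp
      obtain ⟨b, _, rfl⟩ := Finset.mem_image.mp hq
      simp only [List.mem_singleton] at hv1 hv2
      exact hne (by rw [hv1] at hv2; rw [hv2])
  have hcardP : P.card = (Y ∩ Z).card :=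
    Finset.card_image_of_injective _ (fun a b h => by simpa using h)
  have hcut : Cut G Z Y (Y ∩ Z) := by
    rintro ⟨p, ⟨hne, hch, -⟩, -, ⟨a, haY, hha⟩, ⟨b, hbZ, hlb⟩⟩
    obtain ⟨u, rfl⟩ := chain'_singleton_of_no_edge hG hch hne
    simp only [List.head?_cons, Option.some_inj] at hha
    simp only [List.getLast?_singleton, Option.some_inj] at hlb
    subst hha; subst hlb
    rw [Finset.mem_sdiff] at haY hbZ
    exact haY.2 (Finset.mem_inter.mpr ⟨haY.1, hbZ.1⟩)
  refine ⟨P, hfam, le_antisymm ?_ ?_⟩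
  · obtain ⟨c, hcc, hc⟩ := minCut_exists (G := G) (Z := Z) (Y := Y)
    exact hcc ▸ family_card_le_cut hfam hc
  · exact le_trans (minCut_le hcut) (le_of_eq hcardP.symm)

end Edgeless
section HeadLast
variable {V : Type*}

lemma head?_append_left {l l' : List V} (h : l ≠ []) : (l ++ l').head? = l.head? := by
  cases l with
  | nil => exact absurd rfl h
  | cons a t => simp

lemma getLast?_append_right {l l' : List V} (h : l' ≠ []) :
    (l ++ l').getLast? = l'.getLast? := by
  rw [List.getLast?_append]
  cases hgl : l'.getLast? with
  | none => exact absurd (List.getLast?_eq_none_iff.mp hgl) h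
  | some b => simp

end HeadLast

section Del
variable {V : Type*} [Fintype V] [DecidableEq V]

/-- The digraph `G` with the edge `(x, y)` deleted. -/
def del (G : V → V → Prop) (x y : V) : V → V → Prop :=
  fun u v => G u v ∧ ¬(u = x ∧ v = y)

variable {G : V → V → Prop} {Z Y S : Finset V} {x y : V}

lemma del_le : ∀ u v, del G x y u v → G u v := fun _ _ h => h.1

lemma cut_insert_left (hS : Cut (del G x y) Z Y S) : Cut G Z Y (insert x S) := by
  rintro ⟨p, ⟨hne, hch, hnd⟩, hav, ⟨a, haY, hha⟩, ⟨b, hbZ, hlb⟩⟩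
  have hx : x ∉ p := fun h => hav x h (Finset.mem_insert_self x S)
  have hch' : p.Chain' (del G x y) := chain'_restrict p hch
    (fun u hu v hv hG => ⟨hG, fun h => hx (by rw [← h.1]; exact (List.dropLast_sublist _).subset hu)⟩)
  exact hS.not_walk hch' hne
    (fun v hv hvS => hav v hv (Finset.mem_insert_of_mem hvS))
    (Finset.mem_sdiff.mp haY).1 hha (Finset.mem_sdiff.mp hbZ).1 hlb

lemma cut_insert_right (hS : Cut (del G x y) Z Y S) : Cut G Z Y (insert y S) := by
  rintro ⟨p, ⟨hne, hch, hnd⟩, hav, ⟨a, haY, hha⟩, ⟨b, hbZ, hlb⟩⟩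
  have hy : y ∉ p := fun h => hav y h (Finset.mem_insert_self y S)
  have hch' : p.Chain' (del G x y) := chain'_restrict_tail p hch
    (fun u hu v hv hG => ⟨hG, fun h => hy (by rw [← h.2]; exact (List.tail_sublist _).subset hv)⟩)
  exact hS.not_walk hch' hne
    (fun v hv hvS => hav v hv (Finset.mem_insert_of_mem hvS))
    (Finset.mem_sdiff.mp haY).1 hha (Finset.mem_sdiff.mp hbZ).1 hlb

lemma cutA_to_cut (hS : Cut (del G x y) Z Y S) {c : Finset V}
    (hc : Cut (del G x y) (insert x S) Y c) : Cut G Z Y c := by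
  rintro ⟨p, ⟨hne, hch, hnd⟩, hav, ⟨a, haY, hha⟩, ⟨b, hbZ, hlb⟩⟩
  have hwX : ∃ w ∈ p, w ∈ insert x S := by
    by_contra hno
    push_neg at hno
    have hx : x ∉ p := fun h => hno x h (Finset.mem_insert_self x S)
    have hch' : p.Chain' (del G x y) := chain'_restrict p hch
      (fun u hu v hv hG => ⟨hG, fun h => hx (by rw [← h.1]; exact (List.dropLast_sublist _).subset hu)⟩)
    exact hS.not_walk hch' hne (fun v hv hvS => hno v hv (Finset.mem_insert_of_mem hvS))
      (Finset.mem_sdiff.mp haY).1 hha (Finset.mem_sdiff.mp hbZ).1 hlb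
  obtain ⟨q, w, r, heq, hwX', hq⟩ := exists_first_mem (X := fun v => v ∈ insert x S) p hwX
  have hpre : q ++ [w] <+: p := ⟨r, by simp [heq]⟩
  have hchf : (q ++ [w]).Chain' G := hch.prefix hpre
  have hchf' : (q ++ [w]).Chain' (del G x y) := chain'_restrict _ hchf
    (fun u hu v hv hG => ⟨hG, fun h => by
      rw [List.dropLast_concat] at hu
      exact hq u hu (h.1 ▸ Finset.mem_insert_self x S)⟩)
  have hwp : w ∈ p := by rw [heq]; exact List.mem_append_cons_self
  have hhead : (q ++ [w]).head? = some a := by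
    cases q with
    | nil => simpa [heq] using hha
    | cons c0 t0 => simpa [heq] using hha
  exact hc.not_walk hchf' (by simp)
    (fun v hv => hav v (hpre.sublist.subset hv))
    (Finset.mem_sdiff.mp haY).1 hhead hwX' List.getLast?_concat

lemma cutB_to_cut (hS : Cut (del G x y) Z Y S) {c : Finset V}
    (hc : Cut (del G x y) Z (insert y S) c) : Cut G Z Y c := by
  rintro ⟨p, ⟨hne, hch, hnd⟩, hav, ⟨a, haY, hha⟩, ⟨b, hbZ, hlb⟩⟩
  have hwX : ∃ w ∈ p, w ∈ insert y S := by
    by_contra hno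
    push_neg at hno
    have hy : y ∉ p := fun h => hno y h (Finset.mem_insert_self y S)
    have hch' : p.Chain' (del G x y) := chain'_restrict_tail p hch
      (fun u hu v hv hG => ⟨hG, fun h => hy (by rw [← h.2]; exact (List.tail_sublist _).subset hv)⟩)
    exact hS.not_walk hch' hne (fun v hv hvS => hno v hv (Finset.mem_insert_of_mem hvS))
      (Finset.mem_sdiff.mp haY).1 hha (Finset.mem_sdiff.mp hbZ).1 hlb
  obtain ⟨q, w, r, heq, hwX', hr⟩ := exists_last_mem (X := fun v => v ∈ insert y S) p hwX
  have hsuf : w :: r <:+ p := ⟨q, by simp [heq]⟩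
  have hchb : (w :: r).Chain' G := hch.suffix hsuf
  have hchb' : (w :: r).Chain' (del G x y) := chain'_restrict_tail _ hchb
    (fun u hu v hv hG => ⟨hG, fun h => by
      simp only [List.tail_cons] at hv
      exact hr v hv (h.2 ▸ Finset.mem_insert_self y S)⟩)
  have hlast : (w :: r).getLast? = some b := by
    rw [heq, List.getLast?_append] at hlb
    cases hgl : (w :: r).getLast? with
    | none => simp at hgl
    | some b0 => rw [hgl] at hlb; simpa using hlb
  exact hc.not_walk hchb' (by simp)
    (fun v hv => hav v (hsuf.sublist.subset hv))
    hwX' rfl (Finset.mem_sdiff.mp hbZ).1 hlast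

/-- The key disjointness lemma: a `Y`→`X` path meeting `X` only at its end and an
`X'`→`Z` path meeting `X'` only at its start can only intersect at a common
endpoint lying in `S`. -/
lemma cross_lemma (hS : Cut (del G x y) Z Y S) {p q : List V}
    (hpch : p.Chain' (del G x y)) (hpne : p ≠ []) (hpnd : p.Nodup)
    (hpY : ∃ a ∈ Y, p.head? = some a)
    (hpdl : ∀ u ∈ p.dropLast, u ∉ insert x S)
    (hqch : q.Chain' (del G x y)) (hqne : q ≠ []) (hqnd : q.Nodup)
    (hqZ : ∃ b ∈ Z, q.getLast? = some b)
    (hqtl : ∀ u ∈ q.tail, u ∉ insert y S)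
    {v : V} (hvp : v ∈ p) (hvq : v ∈ q) :
    ∃ s ∈ S, p.getLast? = some s ∧ q.head? = some s ∧ v = s := by
  obtain ⟨a, haY, hha⟩ := hpY
  obtain ⟨b, hbZ, hlb⟩ := hqZ
  obtain ⟨p₁, p₂, hpe⟩ := List.append_of_mem hvp
  obtain ⟨q₁, q₂, hqe⟩ := List.append_of_mem hvq
  set walk : List V := (p₁ ++ [v]) ++ q₂ with hwalk
  have hfrontpre : p₁ ++ [v] <+: p := ⟨p₂, by simp [hpe]⟩
  have hbacksuf : v :: q₂ <:+ q := ⟨q₁, by simp [hqe]⟩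
  have hchw : walk.Chain' (del G x y) := by
    apply List.IsChain.append (hpch.prefix hfrontpre) (hqch.suffix hbacksuf).tail
    intro u hu z hz
    rw [List.getLast?_concat] at hu
    simp only [Option.mem_def, Option.some_inj] at hu
    subst hu
    exact (List.isChain_cons.mp (hqch.suffix hbacksuf)).1 z hz
  have hwne : walk ≠ [] := by simp [hwalk]
  have hwhead : walk.head? = some a := by
    rw [hwalk, head?_append_left (by simp), ← hha, hpe]
    cases p₁ with
    | nil => simp
    | cons c0 t0 => simp
  have hwlast : ∃ b' ∈ Z, walk.getLast? = some b' := by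
    cases hq2 : q₂ with
    | nil =>
      refine ⟨b, hbZ, ?_⟩
      have : q.getLast? = some v := by
        rw [hqe, hq2, getLast?_append_right (l' := [v] ) (by simp)]
        · simp
      rw [this] at hlb
      rw [hwalk, hq2, List.append_nil, List.getLast?_concat]
      simpa using hlb
    | cons c0 t0 =>
      refine ⟨b, hbZ, ?_⟩
      rw [hwalk, getLast?_append_right (by simp [hq2])]
      rw [hqe, getLast?_append_right (by simp), getLast?_cons_ne (by simp [hq2])] at hlb
      exact hlb
  obtain ⟨b', hb'Z, hwl⟩ := hwlast
  have hu : ∃ u ∈ walk, u ∈ S := by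
    by_contra hno
    push_neg at hno
    exact hS.not_walk hchw hwne hno haY hwhead hb'Z hwl
  obtain ⟨u, huw, huS⟩ := hu
  rcases List.mem_append.mp huw with hu1 | hu2
  · -- u in the front part of p
    have hup : u ∈ p := hfrontpre.sublist.subset hu1
    have hlastp : p.getLast? = some u := by
      rcases mem_getLast_or_dropLast hup with h | h
      · exact absurd (Finset.mem_insert_of_mem huS) (hpdl u h)
      · exact h
    have huv : u = v := by
      rcases List.mem_append.mp hu1 with h1 | h1
      · exfalso
        have hu2p : u ∈ v :: p₂ := by
          have : (v :: p₂).getLast? = some u := by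
            rw [hpe, getLast?_append_right (by simp)] at hlastp
            exact hlastp
          exact mem_of_getLast?_eq this
        have hnd2 := hpe ▸ hpnd
        exact (List.nodup_append'.mp hnd2).2.2 h1 hu2p
      · simpa using h1
    subst huv
    have hqhead : q.head? = some u := by
      cases hql : q with
      | nil => exact absurd hql hqne
      | cons c0 t0 =>
        have : u ∉ t0 := fun h =>
          hqtl u (by rw [hql]; simpa using h) (Finset.mem_insert_of_mem huS)
        have : u = c0 := by
          rcases List.mem_cons.mp (hql ▸ hvq) with h | h
          · exact h
          · exact absurd h this
        simp [this]
    exact ⟨u, huS, hlastp, hqhead, rfl⟩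
  · -- u in the back part: contradiction with hqtl
    exfalso
    have : u ∈ q.tail := by
      cases q₁ with
      | nil => rw [hqe]; simpa using hu2
      | cons c0 t0 =>
        rw [hqe]
        simp only [List.cons_append, List.tail_cons]
        exact List.mem_append.mpr (Or.inr (List.mem_cons_of_mem _ hu2))
    exact hqtl u this (Finset.mem_insert_of_mem huS)

end Del
lemma menger_hard {V : Type*} [Fintype V] [DecidableEq V] :
    ∀ (n : ℕ) (G : V → V → Prop), (∀ v, ¬ G v v) →
      (Finset.univ.filter fun e : V × V => G e.1 e.2).card ≤ n →
      ∀ Z Y : Finset V, ∃ P : Finset (List V), PathFamily G Z Y P ∧ P.card = minCut G Z Y := by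
  intro n
  induction n with
  | zero =>
    intro G hloop hcard Z Y
    apply edgeless_family _ Z Y
    intro u v huv
    have hm : (u, v) ∈ Finset.univ.filter (fun e : V × V => G e.1 e.2) := by
      simp [Finset.mem_filter, huv]
    rw [Finset.card_eq_zero.mp (Nat.le_zero.mp hcard)] at hm
    simp at hm
  | succ n ih =>
    intro G hloop hcard Z Y
    by_cases hE : ∀ u v, ¬ G u v
    · exact edgeless_family hE Z Y
    push_neg at hE
    obtain ⟨x, y, hxy⟩ := hE
    have hxney : x ≠ y := fun h => hloop y (h ▸ hxy)
    have hG'loop : ∀ v, ¬ del G x y v v := fun v h => hloop v h.1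
    have hcard' : (Finset.univ.filter fun e : V × V => del G x y e.1 e.2).card ≤ n := by
      have hss : (Finset.univ.filter fun e : V × V => del G x y e.1 e.2) ⊂
          Finset.univ.filter fun e : V × V => G e.1 e.2 := by
        refine (Finset.ssubset_iff_of_subset (fun e he => ?_)).mpr ⟨(x, y), ?_, ?_⟩
        · rw [Finset.mem_filter] at he ⊢
          exact ⟨he.1, he.2.1⟩
        · simp [Finset.mem_filter, hxy]
        · simp [Finset.mem_filter, del]
      have := Finset.card_lt_card hss
      omega
    set k := minCut G Z Y with hk
    rcases eq_or_lt_of_le (minCut_anti (del_le (G := G) (x := x) (y := y)) Z Y) with heqk | hltk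
    · obtain ⟨P, hP, hc⟩ := ih (del G x y) hG'loop hcard' Z Y
      exact ⟨P, hP.mono del_le, by rw [hc, heqk]⟩
    obtain ⟨S, hScard, hS⟩ := minCut_exists (G := del G x y) (Z := Z) (Y := Y)
    have hSlt : S.card < k := by rw [hScard]; exact hltk
    have hkx : k ≤ (insert x S).card := minCut_le (cut_insert_left hS)
    have hky : k ≤ (insert y S).card := minCut_le (cut_insert_right hS)
    have hxS : x ∉ S := fun h => by rw [Finset.insert_eq_self.mpr h] at hkx; omega
    have hyS : y ∉ S := fun h => by rw [Finset.insert_eq_self.mpr h] at hky; omega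
    have hXcard : (insert x S).card = k :=
      le_antisymm (by rw [Finset.card_insert_of_notMem hxS]; omega) hkx
    have hX'card : (insert y S).card = k :=
      le_antisymm (by rw [Finset.card_insert_of_notMem hyS]; omega) hky
    set X := insert x S with hX
    set X' := insert y S with hX'
    -- the minimum cut between Y and X in G - e is exactly k
    have hcutXX : Cut (del G x y) X Y X := by
      rintro ⟨p, -, -, -, ⟨b, hb, -⟩⟩
      simp at hb
    have hminA : minCut (del G x y) X Y = k := by
      refine le_antisymm (le_trans (minCut_le hcutXX) (le_of_eq hXcard)) ?_
      obtain ⟨c, hcc, hcut⟩ := minCut_exists (G := del G x y) (Z := X) (Y := Y)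
      exact hcc ▸ minCut_le (cutA_to_cut hS hcut)
    have hcutX'X' : Cut (del G x y) Z X' X' := by
      rintro ⟨p, -, -, ⟨a, ha, -⟩, -⟩
      simp at ha
    have hminB : minCut (del G x y) Z X' = k := by
      refine le_antisymm (le_trans (minCut_le hcutX'X') (le_of_eq hX'card)) ?_
      obtain ⟨c, hcc, hcut⟩ := minCut_exists (G := del G x y) (Z := Z) (Y := X')
      exact hcc ▸ minCut_le (cutB_to_cut hS hcut)
    obtain ⟨P₁, hP₁, hP₁c⟩ := ih (del G x y) hG'loop hcard' X Y
    obtain ⟨P₂, hP₂, hP₂c⟩ := ih (del G x y) hG'loop hcard' Z X'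
    rw [hminA] at hP₁c
    rw [hminB] at hP₂c
    obtain ⟨Q₁, hQ₁, hQ₁c, hQ₁dl⟩ := family_truncF hP₁
    obtain ⟨Q₂, hQ₂, hQ₂c, hQ₂tl⟩ := family_truncL hP₂
    rw [hP₁c] at hQ₁c
    rw [hP₂c] at hQ₂c
    have hcov1 := family_cover_last hQ₁ (by rw [hQ₁c, hXcard])
    have hcov2 := family_cover_head hQ₂ (by rw [hQ₂c, hX'card])
    have hc1 : ∀ w : V, ∃ p : List V, w ∈ X → p ∈ Q₁ ∧ p.getLast? = some w := by
      intro w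
      by_cases h : w ∈ X
      · obtain ⟨p, hp, hl⟩ := hcov1 w h
        exact ⟨p, fun _ => ⟨hp, hl⟩⟩
      · exact ⟨[], fun h' => absurd h' h⟩
    choose f1 hf1 using hc1
    have hc2 : ∀ w : V, ∃ p : List V, w ∈ X' → p ∈ Q₂ ∧ p.head? = some w := by
      intro w
      by_cases h : w ∈ X'
      · obtain ⟨p, hp, hl⟩ := hcov2 w h
        exact ⟨p, fun _ => ⟨hp, hl⟩⟩
      · exact ⟨[], fun h' => absurd h' h⟩
    choose f2 hf2 using hc2
    have cross : ∀ p ∈ Q₁, ∀ q ∈ Q₂, ∀ v, v ∈ p → v ∈ q →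
        ∃ s ∈ S, p.getLast? = some s ∧ q.head? = some s ∧ v = s := by
      intro p hp q hq v hvp hvq
      obtain ⟨⟨hpne, hpch, hpnd⟩, hpY, -⟩ := hQ₁.1 p hp
      obtain ⟨⟨hqne, hqch, hqnd⟩, -, hqZ⟩ := hQ₂.1 q hq
      exact cross_lemma hS hpch hpne hpnd hpY (hQ₁dl p hp) hqch hqne hqnd hqZ
        (hQ₂tl q hq) hvp hvq
    set σ : V → V := fun w => if w = x then y else w with hσ
    set glue : V → List V := fun w =>
      f1 w ++ (if w = x then f2 (σ w) else (f2 (σ w)).tail) with hglue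
    have hσX' : ∀ w ∈ X, σ w ∈ X' := by
      intro w hw
      by_cases h : w = x
      · simp only [hσ, if_pos h]
        exact Finset.mem_insert_self y S
      · simp only [hσ, if_neg h]
        rcases Finset.mem_insert.mp hw with h' | h'
        · exact absurd h' h
        · exact Finset.mem_insert_of_mem h'
    have hσinj : ∀ w ∈ X, ∀ w' ∈ X, σ w = σ w' → w = w' := by
      intro w hw w' hw' h
      by_cases h1 : w = x <;> by_cases h2 : w' = x
      · rw [h1, h2]
      · exfalso
        simp only [hσ, if_pos h1, if_neg h2] at h
        rcases Finset.mem_insert.mp hw' with h' | h'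
        · exact h2 h'
        · exact hyS (h ▸ h')
      · exfalso
        simp only [hσ, if_neg h1, if_pos h2] at h
        rcases Finset.mem_insert.mp hw with h' | h'
        · exact h1 h'
        · exact hyS (h ▸ h')
      · simpa [hσ, if_neg h1, if_neg h2] using h
    have hwmem : ∀ w ∈ X, w ∈ f1 w := fun w hw => mem_of_getLast?_eq (hf1 w hw).2
    have hmem_glue : ∀ w ∈ X, ∀ v ∈ glue w, v ∈ f1 w ∨ v ∈ f2 (σ w) := by
      intro w hw v hv
      simp only [hglue] at hv
      rcases List.mem_append.mp hv with h | h
      · exact Or.inl h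
      · by_cases hwx : w = x
        · rw [if_pos hwx] at h
          exact Or.inr h
        · rw [if_neg hwx] at h
          exact Or.inr ((List.tail_sublist _).subset h)
    have hwglue : ∀ w ∈ X, w ∈ glue w := by
      intro w hw
      simp only [hglue]
      exact List.mem_append.mpr (Or.inl (hwmem w hw))
    have crossf : ∀ w ∈ X, ∀ w' ∈ X, ∀ v, v ∈ f1 w → v ∈ f2 (σ w') →
        w ∈ S ∧ w = σ w' ∧ v = w := by
      intro w hw w' hw' v h1 h2
      obtain ⟨s, hsS, hlast, hhead, rfl⟩ :=
        cross (f1 w) (hf1 w hw).1 (f2 (σ w')) (hf2 _ (hσX' w' hw')).1 v h1 h2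
      have hws : w = v := by
        have h := (hf1 w hw).2
        rw [hlast] at h
        simpa using h.symm
      have hσs : σ w' = v := by
        have h := (hf2 _ (hσX' w' hw')).2
        rw [hhead] at h
        simpa using h.symm
      exact ⟨hws ▸ hsS, by rw [hws, hσs], hws.symm⟩
    have hdisj : ∀ w ∈ X, ∀ w' ∈ X, w ≠ w' → ∀ v, v ∈ glue w → v ∈ glue w' → False := by
      intro w hw w' hw' hne v hv hv'
      have hcase : ∀ w1, w1 ∈ X → ∀ w2, w2 ∈ X → w1 ≠ w2 → ∀ u, u ∈ f1 w1 →
          u ∈ f2 (σ w2) → False := by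
        intro w1 hw1 w2 hw2 hne12 u hu1 hu2
        obtain ⟨hw1S, hw1eq, -⟩ := crossf w1 hw1 w2 hw2 u hu1 hu2
        by_cases hw2x : w2 = x
        · rw [hw2x] at hw1eq
          simp only [hσ, if_pos rfl] at hw1eq
          exact hyS (hw1eq ▸ hw1S)
        · simp only [hσ, if_neg hw2x] at hw1eq
          exact hne12 hw1eq
      rcases hmem_glue w hw v hv with h1 | h1 <;> rcases hmem_glue w' hw' v hv' with h2 | h2
      · have hf1ne : f1 w ≠ f1 w' := by
          intro h
          apply hne
          have e1 := (hf1 w hw).2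
          have e2 := (hf1 w' hw').2
          rw [h] at e1
          rw [e1] at e2
          simpa using e2
        exact hQ₁.2 (hf1 w hw).1 (hf1 w' hw').1 hf1ne v h1 h2
      · exact hcase w hw w' hw' hne v h1 h2
      · exact hcase w' hw' w hw hne.symm v h2 h1
      · have hσne : σ w ≠ σ w' := fun h => hne (hσinj w hw w' hw' h)
        have hf2ne : f2 (σ w) ≠ f2 (σ w') := by
          intro h
          apply hσne
          have e1 := (hf2 _ (hσX' w hw)).2
          have e2 := (hf2 _ (hσX' w' hw')).2
          rw [h] at e1
          rw [e1] at e2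
          simpa using e2
        exact hQ₂.2 (hf2 _ (hσX' w hw)).1 (hf2 _ (hσX' w' hw')).1 hf2ne v h1 h2
    have hglue_good : ∀ w ∈ X, IsDiPath G (glue w) ∧
        (∃ a ∈ Y, (glue w).head? = some a) ∧ (∃ b ∈ Z, (glue w).getLast? = some b) := by
      intro w hw
      obtain ⟨hfQ, hflast⟩ := hf1 w hw
      obtain ⟨⟨hfne, hfch, hfnd⟩, ⟨a, haY, hfh⟩, -⟩ := hQ₁.1 _ hfQ
      obtain ⟨hgQ, hghead⟩ := hf2 (σ w) (hσX' w hw)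
      obtain ⟨⟨hgne, hgch, hgnd⟩, -, ⟨b, hbZ, hgl⟩⟩ := hQ₂.1 _ hgQ
      by_cases hwx : w = x
      · have hgd : glue w = f1 w ++ f2 (σ w) := by simp only [hglue, if_pos hwx]
        have hσw : σ w = y := by simp only [hσ, if_pos hwx]
        have hdj : ∀ u, u ∈ f1 w → u ∈ f2 (σ w) → False := by
          intro u hu1 hu2
          obtain ⟨hwS, hweq, -⟩ := crossf w hw w hw u hu1 hu2
          rw [hσw] at hweq
          exact hyS (hweq ▸ hwS)
        have hch : (glue w).Chain' G := by
          rw [hgd]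
          refine List.IsChain.append (hfch.imp del_le) (hgch.imp del_le) ?_
          intro u hu z hz
          rw [hflast] at hu
          rw [hghead] at hz
          simp only [Option.mem_def, Option.some_inj] at hu hz
          rw [← hu, ← hz, hσw, hwx]
          exact hxy
        refine ⟨⟨by simp [hgd, hfne], hch, ?_⟩, ⟨a, haY, ?_⟩, ⟨b, hbZ, ?_⟩⟩
        · rw [hgd]
          exact List.nodup_append'.mpr ⟨hfnd, hgnd, hdj⟩
        · rw [hgd, head?_append_left hfne]
          exact hfh
        · rw [hgd, getLast?_append_right hgne]
          exact hgl
      · have hgd : glue w = f1 w ++ (f2 (σ w)).tail := by simp only [hglue, if_neg hwx]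
        have hσw : σ w = w := by simp only [hσ, if_neg hwx]
        obtain ⟨t, hqe⟩ : ∃ t, f2 (σ w) = w :: t := by
          cases hql : f2 (σ w) with
          | nil => rw [hql] at hghead; simp at hghead
          | cons c0 t0 =>
            rw [hql] at hghead
            simp only [List.head?_cons, Option.some_inj, hσw] at hghead
            exact ⟨t0, by rw [hghead]⟩
        have hdj : ∀ u, u ∈ f1 w → u ∈ t → False := by
          intro u hu1 hu2
          have hu2' : u ∈ f2 (σ w) := by rw [hqe]; exact List.mem_cons_of_mem _ hu2
          obtain ⟨-, -, huw⟩ := crossf w hw w hw u hu1 hu2'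
          have : w ∉ t := by
            have := hqe ▸ hgnd
            exact (List.nodup_cons.mp this).1
          exact this (huw ▸ hu2)
        have hgd2 : glue w = f1 w ++ t := by rw [hgd, hqe, List.tail_cons]
        have hch : (glue w).Chain' G := by
          rw [hgd2]
          refine List.IsChain.append (hfch.imp del_le) ?_ ?_
          · have := (hqe ▸ hgch).tail
            simpa using this.imp del_le
          · intro u hu z hz
            rw [hflast] at hu
            simp only [Option.mem_def, Option.some_inj] at hu
            rw [← hu]
            have := List.isChain_cons.mp (hqe ▸ hgch)
            exact (this.1 z hz).1
        refine ⟨⟨by simp [hgd2, hfne], hch, ?_⟩, ⟨a, haY, ?_⟩, ?_⟩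
        · rw [hgd2]
          exact List.nodup_append'.mpr ⟨hfnd, (List.nodup_cons.mp (hqe ▸ hgnd)).2, hdj⟩
        · rw [hgd2, head?_append_left hfne]
          exact hfh
        · cases ht : t with
          | nil =>
            refine ⟨w, ?_, ?_⟩
            · have : b = w := by
                rw [hqe, ht] at hgl
                simpa using hgl.symm
              exact this ▸ hbZ
            · rw [hgd2, ht, List.append_nil]
              exact hflast
          | cons c0 t0 =>
            refine ⟨b, hbZ, ?_⟩
            rw [hgd2, getLast?_append_right (by simp [ht])]
            rw [hqe, getLast?_cons_ne (by simp [ht])] at hgl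
            exact hgl
    refine ⟨X.image glue, ⟨?_, ?_⟩, ?_⟩
    · intro p hp
      obtain ⟨w, hw, rfl⟩ := Finset.mem_image.mp hp
      exact hglue_good w hw
    · intro p hp q hq hne v h1 h2
      obtain ⟨w, hw, rfl⟩ := Finset.mem_image.mp hp
      obtain ⟨w', hw', rfl⟩ := Finset.mem_image.mp hq
      have hww' : w ≠ w' := fun h => hne (by rw [h])
      exact hdisj w hw w' hw' hww' v h1 h2
    · rw [Finset.card_image_of_injOn, hXcard]
      intro w hw w' hw' heq
      by_contra hne
      exact hdisj w (Finset.mem_coe.mp hw) w' (Finset.mem_coe.mp hw') hne w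
        (hwglue w (Finset.mem_coe.mp hw)) (heq ▸ hwglue w (Finset.mem_coe.mp hw))
/-- **Menger's theorem (vertex version with possibly overlapping source/sink sets).**
The maximum number of vertex-disjoint directed paths from `Y` to `Z` equals the
minimum cardinality of a vertex set `c` whose removal leaves no directed path
from `Y \ c` to `Z \ c`. -/
theorem pathRank_eq_min_cut {V : Type*} [Fintype V] [DecidableEq V]
    (G : V → V → Prop) (hloop : ∀ v, ¬ G v v) (Z Y : Finset V) :
    pathRank G Z Y =
      sInf {k | ∃ c : Finset V, c.card = k ∧
        ¬ ∃ p : List V, IsDiPath G p ∧ (∀ v ∈ p, v ∉ c) ∧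
          (∃ a ∈ Y \ c, p.head? = some a) ∧ (∃ b ∈ Z \ c, p.getLast? = some b)} := by
  have hmc : sInf {k | ∃ c : Finset V, c.card = k ∧
      ¬ ∃ p : List V, IsDiPath G p ∧ (∀ v ∈ p, v ∉ c) ∧
        (∃ a ∈ Y \ c, p.head? = some a) ∧ (∃ b ∈ Z \ c, p.getLast? = some b)}
      = minCut G Z Y := rfl
  rw [hmc]
  have hempty : PathFamily G Z Y ∅ := ⟨fun p hp => absurd hp (Finset.notMem_empty p), by simp⟩
  have hne : {k | ∃ P : Finset (List V), PathFamily G Z Y P ∧ P.card = k}.Nonempty :=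
    ⟨0, ∅, hempty, by simp⟩
  apply le_antisymm
  · apply csSup_le hne
    rintro k ⟨P, hP, rfl⟩
    obtain ⟨c, hcc, hc⟩ := minCut_exists (G := G) (Z := Z) (Y := Y)
    exact hcc ▸ family_card_le_cut hP hc
  · obtain ⟨P, hP, hPc⟩ := menger_hard
      (Finset.univ.filter fun e : V × V => G e.1 e.2).card G hloop le_rfl Z Y
    rw [← hPc]
    refine le_csSup ⟨(Finset.univ : Finset V).card, ?_⟩ ⟨P, hP, rfl⟩
    rintro k ⟨Q, hQ, rfl⟩
    exact family_card_le_cut hQ cut_univ
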